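/- Let A_{2n-1} = n+1, A_{2n} = n + 3n², B_{2n-1} = n, B_{2n} = n² (for n ≥ 1). Then for any sequence {w_n} taking values in {1, 2} (or more generally any bounded sequence of positive reals bounded away from 0), both (A_{2n} + w_{2n} A_{2n-1})/(B_{2n} + w_{2n} B_{2n-1}) → 3 and (A_{2n+1} + w_{2n+1} A_{2n})/(B_{2n+1} + w_{2n+1} B_{2n}) → 3 as n → ∞. Consequently the continued fraction with these convergents converges generally to 3, even though its odd approximants tend to 1 and its even approximants tend to 3. -/

import Mathlib

open Filter Topology

/-- The chordal metric on the Riemann sphere `ℂ ∪ {∞}`, modelled as `Option ℂ`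
with `none = ∞`. -/
noncomputable def chordal : Option ℂ → Option ℂ → ℝ
  | some w, some z =>
      ‖z - w‖ /
        (Real.sqrt (1 + ‖w‖ ^ 2) * Real.sqrt (1 + ‖z‖ ^ 2))
  | some w, none => 1 / Real.sqrt (1 + ‖w‖ ^ 2)
  | none, some z => 1 / Real.sqrt (1 + ‖z‖ ^ 2)
  | none, none => 0

/-- The modified approximant `S_n(w) = (A n + w A (n-1))/(B n + w B (n-1))` on the
Riemann sphere `Option ℂ` (here `A`, `B` are indexed directly by the subscript,
using truncated subtraction for `n - 1`). -/
noncomputable def modApprox (A B : ℕ → ℂ) (n : ℕ) : Option ℂ → Option ℂ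
  | some w =>
      if B n + w * B (n - 1) = 0 then none
      else some ((A n + w * A (n - 1)) / (B n + w * B (n - 1)))
  | none => if B (n - 1) = 0 then none else some (A (n - 1) / B (n - 1))


/-- Combine even and odd subsequence limits. -/
lemma my_tendsto_of_even_odd {X : Type*} [PseudoMetricSpace X] {f : ℕ → X} {a : X}
    (he : Tendsto (fun n => f (2 * n)) atTop (𝓝 a))
    (ho : Tendsto (fun n => f (2 * n + 1)) atTop (𝓝 a)) :
    Tendsto f atTop (𝓝 a) := by
  rw [Metric.tendsto_atTop] at he ho ⊢
  intro ε hε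
  obtain ⟨N₁, h₁⟩ := he ε hε
  obtain ⟨N₂, h₂⟩ := ho ε hε
  refine ⟨2 * N₁ + 2 * N₂ + 2, fun n hn => ?_⟩
  rcases Nat.even_or_odd n with ⟨m, hm⟩ | ⟨m, hm⟩
  · have hnm : n = 2 * m := by omega
    rw [hnm]; exact h₁ m (by omega)
  · have hnm : n = 2 * m + 1 := by omega
    rw [hnm]; exact h₂ m (by omega)

/-- Real version of the even-index limit. -/
lemma my_realE (w : ℕ → ℝ) (δ M : ℝ) (hδ : 0 < δ) (hl : ∀ n, δ ≤ w n) (hu : ∀ n, w n ≤ M) :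
    Tendsto (fun n : ℕ => ((n : ℝ) + 3 * n ^ 2 + w n * (n + 1)) / ((n : ℝ) ^ 2 + w n * n))
      atTop (𝓝 3) := by
  have hM0 : 0 < M := lt_of_lt_of_le hδ ((hl 0).trans (hu 0))
  rw [← tendsto_sub_nhds_zero_iff]
  apply squeeze_zero_norm' (a := fun n : ℕ => (1 + 2 * M) / n)
    ?_ (tendsto_const_div_atTop_nhds_zero_nat (1 + 2 * M))
  filter_upwards [eventually_ge_atTop 1] with n hn
  have hn1 : (1 : ℝ) ≤ (n : ℝ) := by exact_mod_cast hn
  have hwl := hl n; have hwu := hu n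
  have hden : (0 : ℝ) < (n : ℝ) ^ 2 + w n * n := by nlinarith
  have heq : ((n : ℝ) + 3 * n ^ 2 + w n * (n + 1)) / ((n : ℝ) ^ 2 + w n * n) - 3
      = ((n : ℝ) + w n - 2 * w n * n) / ((n : ℝ) ^ 2 + w n * n) := by
    rw [eq_div_iff hden.ne', sub_mul, div_mul_cancel₀ _ hden.ne']
    ring
  rw [Real.norm_eq_abs, heq, abs_div, abs_of_pos hden]
  have h1 : |(n : ℝ) + w n - 2 * w n * n| ≤ (1 + 2 * M) * n := by
    rw [abs_le]
    constructor <;> nlinarith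
  have h2 : (1 + 2 * M) / (n : ℝ) = ((1 + 2 * M) * n) / ((n : ℝ) ^ 2) := by
    rw [eq_div_iff (by positivity)]
    field_simp
  rw [h2]
  apply div_le_div₀ (by positivity) h1 (by positivity)
  nlinarith

/-- Real version of the odd-index limit. -/
lemma my_realO (w : ℕ → ℝ) (δ M : ℝ) (hδ : 0 < δ) (hl : ∀ n, δ ≤ w n) (hu : ∀ n, w n ≤ M) :
    Tendsto (fun n : ℕ => ((n : ℝ) + 2 + w n * (n + 3 * n ^ 2)) / ((n : ℝ) + 1 + w n * n ^ 2))
      atTop (𝓝 3) := by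
  have hM0 : 0 < M := lt_of_lt_of_le hδ ((hl 0).trans (hu 0))
  rw [← tendsto_sub_nhds_zero_iff]
  apply squeeze_zero_norm' (a := fun n : ℕ => ((M + 3) / δ) / n)
    ?_ (tendsto_const_div_atTop_nhds_zero_nat ((M + 3) / δ))
  filter_upwards [eventually_ge_atTop 1] with n hn
  have hn1 : (1 : ℝ) ≤ (n : ℝ) := by exact_mod_cast hn
  have hwl := hl n; have hwu := hu n
  have hden : (0 : ℝ) < (n : ℝ) + 1 + w n * n ^ 2 := by nlinarith
  have heq : ((n : ℝ) + 2 + w n * (n + 3 * n ^ 2)) / ((n : ℝ) + 1 + w n * n ^ 2) - 3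
      = (w n * n - 2 * n - 1) / ((n : ℝ) + 1 + w n * n ^ 2) := by
    rw [eq_div_iff hden.ne', sub_mul, div_mul_cancel₀ _ hden.ne']
    ring
  rw [Real.norm_eq_abs, heq, abs_div, abs_of_pos hden]
  have h1 : |w n * n - 2 * n - 1| ≤ (M + 3) * n := by
    rw [abs_le]
    constructor <;> nlinarith
  have h2 : ((M + 3) / δ) / (n : ℝ) = ((M + 3) * n) / (δ * n ^ 2) := by
    rw [div_div, eq_div_iff (by positivity)]
    field_simp
  rw [h2]
  apply div_le_div₀ (by positivity) h1 (by positivity)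
  nlinarith

section Main

variable (A B : ℕ → ℂ)
variable (hAo : ∀ n : ℕ, A (2 * n + 1) = (n : ℂ) + 2)
variable (hAe : ∀ n : ℕ, 1 ≤ n → A (2 * n) = (n : ℂ) + 3 * n ^ 2)
variable (hBo : ∀ n : ℕ, B (2 * n + 1) = (n : ℂ) + 1)
variable (hBe : ∀ n : ℕ, 1 ≤ n → B (2 * n) = (n : ℂ) ^ 2)

include hAo hAe hBo hBe in
lemma my_part1a (w : ℕ → ℝ) (hb : ∃ δ > (0 : ℝ), ∀ n, δ ≤ w n) (hub : ∃ M : ℝ, ∀ n, w n ≤ M) :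
    Tendsto (fun n : ℕ =>
        (A (2 * n) + (w (2 * n) : ℂ) * A (2 * n - 1)) /
          (B (2 * n) + (w (2 * n) : ℂ) * B (2 * n - 1))) atTop (𝓝 3) := by
  obtain ⟨δ, hδ, hl⟩ := hb
  obtain ⟨M, hu⟩ := hub
  have hr := my_realE (fun k => w (2 * k)) δ M hδ (fun n => hl _) (fun n => hu _)
  have h2 : Tendsto (fun n : ℕ =>
      ((((n : ℝ) + 3 * n ^ 2 + w (2 * n) * (n + 1)) / ((n : ℝ) ^ 2 + w (2 * n) * n) : ℝ) : ℂ))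
      atTop (𝓝 3) := by
    have := (Complex.continuous_ofReal.tendsto (3 : ℝ)).comp hr
    simpa [Function.comp_def] using this
  apply h2.congr'
  filter_upwards [eventually_ge_atTop 1] with n hn
  have hidx : 2 * n - 1 = 2 * (n - 1) + 1 := by omega
  have hc : ((n - 1 : ℕ) : ℂ) = (n : ℂ) - 1 := by
    push_cast [Nat.cast_sub hn]
    ring
  rw [hidx, hAe n hn, hBe n hn, hAo (n - 1), hBo (n - 1), hc]
  push_cast
  ring

include hAo hAe hBo hBe in
lemma my_part1b (w : ℕ → ℝ) (hb : ∃ δ > (0 : ℝ), ∀ n, δ ≤ w n) (hub : ∃ M : ℝ, ∀ n, w n ≤ M) :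
    Tendsto (fun n : ℕ =>
        (A (2 * n + 1) + (w (2 * n + 1) : ℂ) * A (2 * n)) /
          (B (2 * n + 1) + (w (2 * n + 1) : ℂ) * B (2 * n))) atTop (𝓝 3) := by
  obtain ⟨δ, hδ, hl⟩ := hb
  obtain ⟨M, hu⟩ := hub
  have hr := my_realO (fun k => w (2 * k + 1)) δ M hδ (fun n => hl _) (fun n => hu _)
  have h2 : Tendsto (fun n : ℕ =>
      ((((n : ℝ) + 2 + w (2 * n + 1) * (n + 3 * n ^ 2)) / ((n : ℝ) + 1 + w (2 * n + 1) * n ^ 2) : ℝ) : ℂ))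
      atTop (𝓝 3) := by
    have := (Complex.continuous_ofReal.tendsto (3 : ℝ)).comp hr
    simpa [Function.comp_def] using this
  apply h2.congr'
  filter_upwards [eventually_ge_atTop 1] with n hn
  rw [hAo n, hBo n, hAe n hn, hBe n hn]
  push_cast
  ring

lemma my_chordal_le (x y : ℂ) : chordal (some x) (some y) ≤ ‖y - x‖ := by
  show ‖y - x‖ /
      (Real.sqrt (1 + ‖x‖ ^ 2) * Real.sqrt (1 + ‖y‖ ^ 2)) ≤ _
  have h1 : (1 : ℝ) ≤ Real.sqrt (1 + ‖x‖ ^ 2) := by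
    have h := Real.sqrt_le_sqrt (le_add_of_nonneg_right (sq_nonneg ‖x‖) : (1 : ℝ) ≤ 1 + ‖x‖ ^ 2)
    rwa [Real.sqrt_one] at h
  have h2 : (1 : ℝ) ≤ Real.sqrt (1 + ‖y‖ ^ 2) := by
    have h := Real.sqrt_le_sqrt (le_add_of_nonneg_right (sq_nonneg ‖y‖) : (1 : ℝ) ≤ 1 + ‖y‖ ^ 2)
    rwa [Real.sqrt_one] at h
  exact div_le_self (by positivity) (one_le_mul_of_one_le_of_one_le h1 h2)

lemma my_chordal_nonneg (x y : ℂ) : 0 ≤ chordal (some x) (some y) := by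
  show (0 : ℝ) ≤ ‖y - x‖ / _
  positivity

include hAo hAe hBo hBe in
lemma my_chordal_tendsto (c : ℝ) (hc : 0 < c) :
    Tendsto (fun n => chordal (modApprox A B n (some (c : ℂ))) (some 3)) atTop (𝓝 0) := by
  set S : ℕ → ℂ := fun n => (A n + (c : ℂ) * A (n - 1)) / (B n + (c : ℂ) * B (n - 1)) with hS
  -- S tends to 3
  have hSe : Tendsto (fun n => S (2 * n)) atTop (𝓝 3) := by
    have := my_part1a A B hAo hAe hBo hBe (fun _ => c)
      ⟨c, hc, fun _ => le_refl c⟩ ⟨c, fun _ => le_refl c⟩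
    exact this
  have hSo : Tendsto (fun n => S (2 * n + 1)) atTop (𝓝 3) := by
    have := my_part1b A B hAo hAe hBo hBe (fun _ => c)
      ⟨c, hc, fun _ => le_refl c⟩ ⟨c, fun _ => le_refl c⟩
    apply this.congr
    intro n
    simp [hS]
  have hSt : Tendsto S atTop (𝓝 3) := my_tendsto_of_even_odd hSe hSo
  -- the denominator is nonzero for n ≥ 2
  have hden : ∀ n : ℕ, 2 ≤ n → B n + (c : ℂ) * B (n - 1) ≠ 0 := by
    intro n hn
    rcases Nat.even_or_odd n with ⟨m, hm⟩ | ⟨m, hm⟩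
    · have hm1 : 1 ≤ m := by omega
      have hne : n = 2 * m := by omega
      have hidx : n - 1 = 2 * (m - 1) + 1 := by omega
      have hcm : ((m - 1 : ℕ) : ℂ) = (m : ℂ) - 1 := by
        push_cast [Nat.cast_sub hm1]; ring
      have hval : B n + (c : ℂ) * B (n - 1) = (((m : ℝ) ^ 2 + c * m : ℝ) : ℂ) := by
        rw [hidx, hne, hBe m hm1, hBo (m - 1), hcm]
        push_cast
        ring
      rw [hval]
      have hm1' : (1 : ℝ) ≤ (m : ℝ) := by exact_mod_cast hm1
      exact Complex.ofReal_ne_zero.mpr (by nlinarith)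
    · have hm1 : 1 ≤ m := by omega
      have hne : n = 2 * m + 1 := by omega
      have hidx : n - 1 = 2 * m := by omega
      have hval : B n + (c : ℂ) * B (n - 1) = (((m : ℝ) + 1 + c * m ^ 2 : ℝ) : ℂ) := by
        rw [hidx, hne, hBo m, hBe m hm1]
        push_cast
        ring
      rw [hval]
      have hm1' : (1 : ℝ) ≤ (m : ℝ) := by exact_mod_cast hm1
      exact Complex.ofReal_ne_zero.mpr (by nlinarith)
  have hnorm : Tendsto (fun n => ‖S n - 3‖) atTop (𝓝 0) :=
    tendsto_iff_norm_sub_tendsto_zero.mp hSt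
  apply squeeze_zero' ?_ ?_ hnorm
  · filter_upwards [eventually_ge_atTop 2] with n hn
    rw [show modApprox A B n (some (c : ℂ)) = some (S n) by
      simp [modApprox, hden n hn, hS]]
    exact my_chordal_nonneg _ _
  · filter_upwards [eventually_ge_atTop 2] with n hn
    rw [show modApprox A B n (some (c : ℂ)) = some (S n) by
      simp [modApprox, hden n hn, hS]]
    calc chordal (some (S n)) (some 3) ≤ ‖3 - S n‖ := my_chordal_le _ _
      _ = ‖S n - 3‖ := by rw [norm_sub_rev]

end Main

/-- Let `A_{2n-1} = n+1`, `A_{2n} = n+3n²`, `B_{2n-1} = n`, `B_{2n} = n²`.  For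
any sequence `w` of positive reals bounded away from `0` and bounded above, both
`(A_{2n} + w_{2n} A_{2n-1})/(B_{2n} + w_{2n} B_{2n-1}) → 3` and
`(A_{2n+1} + w_{2n+1} A_{2n})/(B_{2n+1} + w_{2n+1} B_{2n}) → 3`.  Consequently
the continued fraction with these convergents converges generally to `3`, even
though its odd approximants tend to `1` and its even approximants tend to `3`. -/
theorem example_general_convergence
    (A B : ℕ → ℂ)
    (hAo : ∀ n : ℕ, A (2 * n + 1) = (n : ℂ) + 2)
    (hAe : ∀ n : ℕ, 1 ≤ n → A (2 * n) = (n : ℂ) + 3 * n ^ 2)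
    (hBo : ∀ n : ℕ, B (2 * n + 1) = (n : ℂ) + 1)
    (hBe : ∀ n : ℕ, 1 ≤ n → B (2 * n) = (n : ℂ) ^ 2) :
    (∀ w : ℕ → ℝ, (∃ δ > (0 : ℝ), ∀ n, δ ≤ w n) → (∃ M : ℝ, ∀ n, w n ≤ M) →
      Tendsto (fun n : ℕ =>
          (A (2 * n) + (w (2 * n) : ℂ) * A (2 * n - 1)) /
            (B (2 * n) + (w (2 * n) : ℂ) * B (2 * n - 1))) atTop (𝓝 3) ∧
      Tendsto (fun n : ℕ =>
          (A (2 * n + 1) + (w (2 * n + 1) : ℂ) * A (2 * n)) /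
            (B (2 * n + 1) + (w (2 * n + 1) : ℂ) * B (2 * n))) atTop (𝓝 3)) ∧
    (∃ v u : ℕ → Option ℂ,
      0 < Filter.liminf (fun n => chordal (v n) (u n)) atTop ∧
      Tendsto (fun n => chordal (modApprox A B n (v n)) (some 3)) atTop (𝓝 0) ∧
      Tendsto (fun n => chordal (modApprox A B n (u n)) (some 3)) atTop (𝓝 0)) ∧
    Tendsto (fun n : ℕ => A (2 * n + 1) / B (2 * n + 1)) atTop (𝓝 1) ∧
    Tendsto (fun n : ℕ => A (2 * n) / B (2 * n)) atTop (𝓝 3) := by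
  refine ⟨fun w hb hub => ⟨my_part1a A B hAo hAe hBo hBe w hb hub,
      my_part1b A B hAo hAe hBo hBe w hb hub⟩, ?_, ?_, ?_⟩
  · refine ⟨fun _ => some (1 : ℂ), fun _ => some (2 : ℂ), ?_, ?_, ?_⟩
    · rw [liminf_const]
      show (0 : ℝ) < ‖(2 : ℂ) - 1‖ / _
      apply div_pos
      · norm_num
      · apply mul_pos <;> exact Real.sqrt_pos.mpr (by positivity)
    · exact my_chordal_tendsto A B hAo hAe hBo hBe 1 one_pos
    · exact my_chordal_tendsto A B hAo hAe hBo hBe 2 two_pos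
  · -- odd approximants tend to 1
    have hr : Tendsto (fun n : ℕ => (((1 : ℝ) + 1 / ((n : ℝ) + 1) : ℝ) : ℂ)) atTop (𝓝 1) := by
      have h0 : Tendsto (fun n : ℕ => (1 : ℝ) + 1 / ((n : ℝ) + 1)) atTop (𝓝 1) := by
        have := tendsto_one_div_add_atTop_nhds_zero_nat (𝕜 := ℝ)
        simpa using (tendsto_const_nhds (x := (1 : ℝ))).add this
      have := (Complex.continuous_ofReal.tendsto (1 : ℝ)).comp h0
      simpa [Function.comp_def] using this
    apply hr.congr
    intro n
    rw [hAo n, hBo n]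
    have hne : ((n : ℂ) + 1) ≠ 0 := by
      have h : (((n + 1 : ℕ)) : ℂ) ≠ 0 := Nat.cast_ne_zero.mpr (Nat.succ_ne_zero n)
      push_cast at h
      exact h
    push_cast
    field_simp
    ring
  · -- even approximants tend to 3
    have hr : Tendsto (fun n : ℕ => (((3 : ℝ) + 1 / (n : ℝ) : ℝ) : ℂ)) atTop (𝓝 3) := by
      have h0 : Tendsto (fun n : ℕ => (3 : ℝ) + 1 / (n : ℝ)) atTop (𝓝 3) := by
        have := tendsto_const_div_atTop_nhds_zero_nat (1 : ℝ)
        simpa using (tendsto_const_nhds (x := (3 : ℝ))).add this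
      have := (Complex.continuous_ofReal.tendsto (3 : ℝ)).comp h0
      simpa [Function.comp_def] using this
    apply hr.congr'
    filter_upwards [eventually_ge_atTop 1] with n hn
    rw [hAe n hn, hBe n hn]
    have hn1 : (1 : ℝ) ≤ (n : ℝ) := by exact_mod_cast hn
    have hne : ((n : ℂ)) ≠ 0 := by
      exact_mod_cast Nat.cast_ne_zero.mpr (by omega)
    push_cast
    field_simp
    ring
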